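/- With U₂, U₃, U₄ as above on ℝ⁴∖{0} and ρ = √(x₁²+y₁²+x₂²+y₂²), the Lie bracket satisfies [U₂, U₃] = -(2/ρ) U₄. In particular [U₂,U₃] is pointwise linearly independent of U₁, U₂, U₃, so the distribution spanned by (U₁,U₂,U₃) is bracket generating on ℝ⁴∖{0}. -/

import Mathlib

@[simp] lemma vec4_zero {α : Type*} (a b c d : α) : ![a,b,c,d] 0 = a := rfl
@[simp] lemma vec4_one {α : Type*} (a b c d : α) : ![a,b,c,d] 1 = b := rfl
@[simp] lemma vec4_two {α : Type*} (a b c d : α) : ![a,b,c,d] 2 = c := rfl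
@[simp] lemma vec4_three {α : Type*} (a b c d : α) : ![a,b,c,d] 3 = d := rfl

noncomputable def Pj (i : Fin 4) : (Fin 4 → ℝ) →L[ℝ] ℝ := ContinuousLinearMap.proj i

noncomputable def Lmap1 : (Fin 4 → ℝ) →L[ℝ] (Fin 4 → ℝ) :=
  ContinuousLinearMap.pi ![Pj 3, Pj 2, -Pj 1, -Pj 0]

noncomputable def Lmap2 : (Fin 4 → ℝ) →L[ℝ] (Fin 4 → ℝ) :=
  ContinuousLinearMap.pi ![Pj 2, -Pj 3, -Pj 0, Pj 1]

lemma Lmap1_apply (q : Fin 4 → ℝ) : Lmap1 q = ![q 3, q 2, -q 1, -q 0] := by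
  funext i; fin_cases i <;> simp [Lmap1, Pj]

lemma Lmap2_apply (q : Fin 4 → ℝ) : Lmap2 q = ![q 2, -q 3, -q 0, q 1] := by
  funext i; fin_cases i <;> simp [Lmap2, Pj]

noncomputable def Dmap (p : Fin 4 → ℝ) : (Fin 4 → ℝ) →L[ℝ] ℝ :=
  (2*p 0) • Pj 0 + (2*p 1) • Pj 1 + (2*p 2) • Pj 2 + (2*p 3) • Pj 3

lemma Dmap_apply (p v : Fin 4 → ℝ) :
    Dmap p v = 2*p 0*v 0 + 2*p 1*v 1 + 2*p 2*v 2 + 2*p 3*v 3 := by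
  simp [Dmap, Pj]; try ring

lemma hasFDerivAt_N (p : Fin 4 → ℝ) :
    HasFDerivAt (fun q : Fin 4 → ℝ => q 0^2 + q 1^2 + q 2^2 + q 3^2) (Dmap p) p := by
  have h : ∀ i : Fin 4, HasFDerivAt (fun q : Fin 4 → ℝ => q i ^ 2)
      ((2 * p i) • Pj i) p := by
    intro i
    have hi : HasFDerivAt (fun q : Fin 4 → ℝ => q i) (Pj i) p :=
      (Pj i).hasFDerivAt
    have := hi.mul hi
    have e : (2 * p i) • Pj i = p i • Pj i + p i • Pj i := by rw [two_mul, add_smul]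
    rw [e]
    exact this.congr_of_eventuallyEq (Filter.Eventually.of_forall fun q => by simp [pow_two])
  exact (((h 0).add (h 1)).add (h 2)).add (h 3)

theorem bracket_U2_U3 (p : Fin 4 → ℝ) (hp : p ≠ 0) :
    let ρ : (Fin 4 → ℝ) → ℝ := fun q => Real.sqrt (q 0^2 + q 1^2 + q 2^2 + q 3^2)
    let U : Fin 4 → (Fin 4 → ℝ) → (Fin 4 → ℝ) := fun i q =>
      (ρ q)⁻¹ • (![![q 0, q 1, q 2, q 3],
                   ![q 3, q 2, -q 1, -q 0],
                   ![q 2, -q 3, -q 0, q 1],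
                   ![q 1, -q 0, q 3, -q 2]] i)
    let bracket : Fin 4 → ℝ :=
      fderiv ℝ (U 2) p (U 1 p) - fderiv ℝ (U 1) p (U 2 p)
    bracket = (-(2 / ρ p)) • U 3 p ∧
    bracket ∉ Submodule.span ℝ ({U 0 p, U 1 p, U 2 p} : Set (Fin 4 → ℝ)) := by
  intro ρ U bracket
  have hN : 0 < p 0^2 + p 1^2 + p 2^2 + p 3^2 := by
    rcases Function.ne_iff.1 hp with ⟨i, hi⟩
    fin_cases i <;> simp at hi <;>
      nlinarith [pow_two_pos_of_ne_zero hi, sq_nonneg (p 0), sq_nonneg (p 1),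
        sq_nonneg (p 2), sq_nonneg (p 3)]
  have hr : 0 < ρ p := Real.sqrt_pos.2 hN
  set r := ρ p with hrdef
  have hg : HasDerivAt (fun t : ℝ => (Real.sqrt t)⁻¹)
      (-(1 / (2 * Real.sqrt (p 0^2 + p 1^2 + p 2^2 + p 3^2))) /
        Real.sqrt (p 0^2 + p 1^2 + p 2^2 + p 3^2) ^ 2) (p 0^2 + p 1^2 + p 2^2 + p 3^2) :=
    (Real.hasDerivAt_sqrt hN.ne').inv (Real.sqrt_pos.2 hN).ne'
  set k : ℝ := -(1 / (2 * Real.sqrt (p 0^2 + p 1^2 + p 2^2 + p 3^2))) /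
        Real.sqrt (p 0^2 + p 1^2 + p 2^2 + p 3^2) ^ 2 with hkdef
  have hc : HasFDerivAt (fun q => (ρ q)⁻¹) (k • Dmap p) p :=
    by
      have h : HasFDerivAt ((fun t : ℝ => (Real.sqrt t)⁻¹) ∘
          (fun q : Fin 4 → ℝ => q 0^2 + q 1^2 + q 2^2 + q 3^2)) (k • Dmap p) p :=
        hg.comp_hasFDerivAt p (hasFDerivAt_N p)
      exact h
  have hU1fun : U 1 = fun q => (ρ q)⁻¹ • Lmap1 q := by
    funext q
    show (ρ q)⁻¹ • (![![q 0, q 1, q 2, q 3], ![q 3, q 2, -q 1, -q 0],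
        ![q 2, -q 3, -q 0, q 1], ![q 1, -q 0, q 3, -q 2]] 1) = _
    rw [Lmap1_apply, vec4_one]
  have hU2fun : U 2 = fun q => (ρ q)⁻¹ • Lmap2 q := by
    funext q
    show (ρ q)⁻¹ • (![![q 0, q 1, q 2, q 3], ![q 3, q 2, -q 1, -q 0],
        ![q 2, -q 3, -q 0, q 1], ![q 1, -q 0, q 3, -q 2]] 2) = _
    rw [Lmap2_apply, vec4_two]
  have hU1 : HasFDerivAt (U 1) (r⁻¹ • Lmap1 + (k • Dmap p).smulRight (Lmap1 p)) p := by
    rw [hU1fun]; exact hc.smul Lmap1.hasFDerivAt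
  have hU2 : HasFDerivAt (U 2) (r⁻¹ • Lmap2 + (k • Dmap p).smulRight (Lmap2 p)) p := by
    rw [hU2fun]; exact hc.smul Lmap2.hasFDerivAt
  have e1 : U 1 p = r⁻¹ • ![p 3, p 2, -p 1, -p 0] := by
    have h := congrFun hU1fun p
    rw [h, Lmap1_apply]
  have e2 : U 2 p = r⁻¹ • ![p 2, -p 3, -p 0, p 1] := by
    have h := congrFun hU2fun p
    rw [h, Lmap2_apply]
  have e3 : U 3 p = r⁻¹ • ![p 1, -p 0, p 3, -p 2] := by
    show (ρ p)⁻¹ • (![![p 0, p 1, p 2, p 3], ![p 3, p 2, -p 1, -p 0],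
        ![p 2, -p 3, -p 0, p 1], ![p 1, -p 0, p 3, -p 2]] 3) = _
    rw [vec4_three]
  have e0 : U 0 p = r⁻¹ • ![p 0, p 1, p 2, p 3] := by
    show (ρ p)⁻¹ • (![![p 0, p 1, p 2, p 3], ![p 3, p 2, -p 1, -p 0],
        ![p 2, -p 3, -p 0, p 1], ![p 1, -p 0, p 3, -p 2]] 0) = _
    rw [vec4_zero]
  have hDL1 : Dmap p ![p 3, p 2, -p 1, -p 0] = 0 := by
    rw [Dmap_apply]; simp only [vec4_zero, vec4_one, vec4_two, vec4_three]; ring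
  have hDL2 : Dmap p ![p 2, -p 3, -p 0, p 1] = 0 := by
    rw [Dmap_apply]; simp only [vec4_zero, vec4_one, vec4_two, vec4_three]; ring
  have hD1 : Dmap p (U 1 p) = 0 := by rw [e1, map_smul, hDL1, smul_zero]
  have hD2 : Dmap p (U 2 p) = 0 := by rw [e2, map_smul, hDL2, smul_zero]
  have hbr : bracket = (-(2 / r)) • U 3 p := by
    show fderiv ℝ (U 2) p (U 1 p) - fderiv ℝ (U 1) p (U 2 p) = _
    rw [hU1.fderiv, hU2.fderiv]
    have l2 : Lmap2 (U 1 p) = r⁻¹ • ![-p 1, p 0, -p 3, p 2] := by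
      rw [e1, map_smul, Lmap2_apply]
      congr 1
      funext j; fin_cases j <;> simp
    have l1 : Lmap1 (U 2 p) = r⁻¹ • ![p 1, -p 0, p 3, -p 2] := by
      rw [e2, map_smul, Lmap1_apply]
      congr 1
      funext j; fin_cases j <;> simp
    funext i
    simp only [ContinuousLinearMap.add_apply, ContinuousLinearMap.smul_apply,
      ContinuousLinearMap.smulRight_apply, hD1, hD2, smul_zero, zero_smul, l1, l2, e3]
    fin_cases i <;> simp <;> ring
  refine ⟨hbr, ?_⟩
  intro hmem
  set φ : (Fin 4 → ℝ) →ₗ[ℝ] ℝ :=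
    (p 1) • LinearMap.proj 0 - (p 0) • LinearMap.proj 1 +
    (p 3) • LinearMap.proj 2 - (p 2) • LinearMap.proj 3 with hφdef
  have hφ : ∀ v : Fin 4 → ℝ, φ v = p 1 * v 0 - p 0 * v 1 + p 3 * v 2 - p 2 * v 3 := by
    intro v; simp [hφdef]; try ring
  have hle : Submodule.span ℝ ({U 0 p, U 1 p, U 2 p} : Set (Fin 4 → ℝ)) ≤ LinearMap.ker φ := by
    rw [Submodule.span_le]
    rintro v hv
    simp only [Set.mem_insert_iff, Set.mem_singleton_iff] at hv
    simp only [SetLike.mem_coe, LinearMap.mem_ker]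
    rcases hv with rfl | rfl | rfl
    · rw [e0, hφ]; simp only [Pi.smul_apply, smul_eq_mul, vec4_zero, vec4_one, vec4_two,
        vec4_three]; ring
    · rw [e1, hφ]; simp only [Pi.smul_apply, smul_eq_mul, vec4_zero, vec4_one, vec4_two,
        vec4_three]; ring
    · rw [e2, hφ]; simp only [Pi.smul_apply, smul_eq_mul, vec4_zero, vec4_one, vec4_two,
        vec4_three]; ring
  have h0 : φ bracket = 0 := hle hmem
  rw [hbr, e3, hφ] at h0
  simp only [Pi.smul_apply, smul_eq_mul, vec4_zero, vec4_one, vec4_two, vec4_three] at h0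
  have hx : -((2 / r) * r⁻¹ * (p 1^2 + p 0^2 + p 3^2 + p 2^2)) = 0 := by
    linear_combination h0
  have hq : 0 < p 1^2 + p 0^2 + p 3^2 + p 2^2 := by linarith
  have hpos : 0 < (2 / r) * r⁻¹ * (p 1^2 + p 0^2 + p 3^2 + p 2^2) :=
    mul_pos (mul_pos (div_pos two_pos hr) (inv_pos.2 hr)) hq
  linarith
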